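/- Let V be a finite-dimensional real vector space, B a nondegenerate alternating bilinear form on V, P : V → V self-adjoint with respect to B, and A the alternating form A(u, v) = B(Pu, v). Let α, β ∈ ℝ with β ≠ 0, suppose (P² − 2αP + (α² + β²)I)^n = 0 for some n ≥ 1, and let J be the semisimple part of the Jordan–Chevalley decomposition of (P − αI)/β, so J² = −I. Define A^ℂ(u, v) = A(u, v) − i·A(u, Jv) and B^ℂ(u, v) = B(u, v) − i·B(u, Jv). Then a real-linear automorphism Q of V preserves both A and B (i.e. A(Qu, Qv) = A(u, v) and B(Qu, Qv) = B(u, v) for all u, v) if and only if Q commutes with J and preserves both A^ℂ and B^ℂ (i.e. A^ℂ(Qu, Qv) = A^ℂ(u, v) and B^ℂ(Qu, Qv) = B^ℂ(u, v) for all u, v). Consequently Aut(V, A, B) is naturally identified with the group of complex-linear automorphisms of (V, J) preserving A^ℂ and B^ℂ. -/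

import Mathlib

/-- An operator on a vector space is semisimple if every invariant subspace has an
invariant complement. -/
def IsSemisimpleOperator {K V : Type*} [Field K] [AddCommGroup V] [Module K V]
    (S : Module.End K V) : Prop :=
  ∀ U : Submodule K V, (∀ x ∈ U, S x ∈ U) →
    ∃ U' : Submodule K V, IsCompl U U' ∧ ∀ x ∈ U', S x ∈ U'

open Polynomial

private lemma newton_sqrt {A : Type*} [CommRing A] (h2 : IsUnit (2 : A))
    {t : A} (ht : IsNilpotent t) : ∃ c : A, (1 + t * c) ^ 2 = 1 - t := by
  obtain ⟨n, hn⟩ := ht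
  have key : ∀ m : ℕ, 1 ≤ m → ∃ c d : A, (1 + t * c) ^ 2 = 1 - t + t ^ m * d := by
    intro m hm
    induction m, hm using Nat.le_induction with
    | base => exact ⟨0, 1, by ring⟩
    | succ m hm ih =>
      obtain ⟨c, d, hcd⟩ := ih
      have htc : IsNilpotent (t * c) := ⟨n, by rw [mul_pow, hn, zero_mul]⟩
      have hv : IsUnit (1 + t * c) := htc.isUnit_one_add
      obtain ⟨w, hw⟩ := (h2.mul hv).exists_right_inv
      set s := t ^ (m - 1) with hs
      have h1 : t ^ m = t * s := by
        rw [hs, ← pow_succ']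
        congr 1
        omega
      have h2' : t ^ (m + 1) = t * s * t := by rw [pow_succ, h1]
      refine ⟨c + s * (-(d * w)), s * (d * w) ^ 2, ?_⟩
      rw [h2']
      rw [h1] at hcd
      linear_combination hcd - t * s * d * hw
  obtain ⟨c, d, h⟩ := key (n + 1) (by omega)
  refine ⟨c, ?_⟩
  rw [h, pow_succ, hn, zero_mul, zero_mul, add_zero]

private lemma commute_aeval {R : Type*} [Ring R] [Algebra ℝ R] {S W : R}
    (hW : W * S = S * W) (p : ℝ[X]) : W * aeval S p = aeval S p * W := by
  induction p using Polynomial.induction_on with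
  | C a => simp [Algebra.commutes]
  | add p q hp hq => simp [map_add, mul_add, add_mul, hp, hq]
  | monomial k a _ =>
    have h3 : Commute W (S ^ (k + 1)) := (show Commute W S from hW).pow_right (k + 1)
    simp only [map_mul, aeval_C, map_pow, aeval_X]
    rw [← mul_assoc, ← Algebra.commutes a W, mul_assoc, h3.eq, mul_assoc]

private lemma exists_sqrt_neg_one {R : Type*} [Ring R] [Algebra ℝ R] (S : R) {n : ℕ}
    (h : (S ^ 2 + 1) ^ n = 0) :
    ∃ j : R, j ^ 2 = -1 ∧ IsNilpotent (S - j) ∧ ∀ W : R, W * S = S * W → W * j = j * W := by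
  set I : Ideal ℝ[X] := Ideal.span {((X : ℝ[X]) ^ 2 + 1) ^ n} with hI
  set mk := Ideal.Quotient.mk I with hmk
  set φ := aeval (R := ℝ) S with hφ
  have hφI : ∀ q ∈ I, φ q = 0 := by
    intro q hq
    rw [hI, Ideal.mem_span_singleton] at hq
    obtain ⟨r, rfl⟩ := hq
    rw [map_mul, map_pow, map_add, map_pow, map_one, hφ, aeval_X, h, zero_mul]
  have hker : ∀ p q : ℝ[X], mk p = mk q → φ p = φ q := by
    intro p q hpq
    rw [hmk, Ideal.Quotient.eq] at hpq
    have := hφI _ hpq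
    rw [map_sub, sub_eq_zero] at this
    exact this
  set x : ℝ[X] ⧸ I := mk X with hx
  have ht : IsNilpotent (x ^ 2 + 1 : ℝ[X] ⧸ I) := by
    refine ⟨n, ?_⟩
    rw [hx, ← map_one mk, ← map_pow, ← map_add, ← map_pow]
    rw [hmk, Ideal.Quotient.eq_zero_iff_mem]
    exact Ideal.subset_span rfl
  have h2 : IsUnit (2 : ℝ[X] ⧸ I) := by
    refine IsUnit.of_mul_eq_one (algebraMap ℝ _ 2⁻¹) ?_
    rw [← map_ofNat (algebraMap ℝ (ℝ[X] ⧸ I)) 2, ← map_mul]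
    norm_num
  obtain ⟨cq, hc⟩ := newton_sqrt h2 ht
  obtain ⟨c, rfl⟩ := Ideal.Quotient.mk_surjective cq
  obtain ⟨w0q, hw0⟩ := ht.isUnit_one_sub.exists_right_inv
  obtain ⟨w0, rfl⟩ := Ideal.Quotient.mk_surjective w0q
  set wp : ℝ[X] := (1 + (X ^ 2 + 1) * c) * w0 with hwp
  have hveq : mk (1 + (X ^ 2 + 1) * c) = 1 + (x ^ 2 + 1) * mk c := by
    rw [hx]
    simp only [map_add, map_mul, map_pow, map_one]
  have h1 : (1 + (x ^ 2 + 1) * mk c) * mk wp = 1 := by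
    rw [hwp, map_mul, ← hveq, ← mul_assoc, ← pow_two, hveq, hc]
    exact hw0
  have hkey1 : (x * mk wp) ^ 2 = -1 := by
    linear_combination (mk wp ^ 2) * hc - ((1 + (x ^ 2 + 1) * mk c) * mk wp + 1) * h1
  have hkey2 : x - x * mk wp = (x ^ 2 + 1) * (x * mk c * mk wp) := by
    linear_combination (-x) * h1
  obtain ⟨p, hp⟩ := Ideal.Quotient.mk_surjective (x * mk wp)
  obtain ⟨z, hz⟩ := Ideal.Quotient.mk_surjective (x * mk c * mk wp)
  have hX : φ X = S := by rw [hφ]; exact aeval_X S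
  refine ⟨φ p, ?_, ?_, ?_⟩
  · have e1 : mk (p ^ 2) = mk (-1) := by
      rw [map_pow, hp, hkey1, map_neg, map_one]
    have := hker _ _ e1
    rw [map_pow, map_neg, map_one] at this
    exact this
  · have e2 : mk (X - p) = mk ((X ^ 2 + 1) * z) := by
      rw [map_sub, hp, ← hx, hkey2, ← hz, map_mul, map_add, map_pow, map_one, ← hx]
    have h3 := hker _ _ e2
    rw [map_sub, map_mul, map_add, map_pow, map_one, hX] at h3
    rw [h3]
    have hcomm : Commute (S ^ 2 + 1) (φ z) := by
      have h4 : S ^ 2 + 1 = φ (X ^ 2 + 1) := by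
        rw [map_add, map_pow, map_one, hX]
      rw [h4]
      show _ * _ = _ * _
      rw [← map_mul, ← map_mul, mul_comm (X ^ 2 + 1 : ℝ[X])]
    exact hcomm.isNilpotent_mul_right ⟨n, h⟩
  · intro W hW
    exact commute_aeval hW _

/-- Let `(V, B)` be a real symplectic space, `P` a `B`-self-adjoint operator with the single
pair of complex conjugate eigenvalues `α ± iβ` (`β ≠ 0`), `A(u,v) = B(Pu, v)`, `J` the
semisimple part of the Jordan–Chevalley decomposition of `(P − αI)/β` (so `J² = −I`), and
`A^ℂ(u,v) = A(u,v) − i·A(u,Jv)`, `B^ℂ(u,v) = B(u,v) − i·B(u,Jv)`. Then a real-linear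
automorphism `Q` of `V` preserves both `A` and `B` iff `Q` commutes with `J` (i.e. is
complex linear) and preserves both `A^ℂ` and `B^ℂ`. -/
theorem automorphisms_real_iff_complex
    (V : Type*) [AddCommGroup V] [Module ℝ V] [FiniteDimensional ℝ V]
    (B : LinearMap.BilinForm ℝ V) (hBalt : B.IsAlt)
    (hBnd : ∀ u : V, (∀ v : V, B u v = 0) → u = 0)
    (P : Module.End ℝ V) (hP : ∀ u v : V, B (P u) v = B u (P v))
    (α β : ℝ) (hβ : β ≠ 0) (n : ℕ) (hn : 1 ≤ n)
    (hchar : (P ^ 2 - (2 * α) • P + (α ^ 2 + β ^ 2) • (1 : Module.End ℝ V)) ^ n = 0)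
    (J Nn : Module.End ℝ V) (hJss : IsSemisimpleOperator J) (hNn : IsNilpotent Nn)
    (hcomm : J * Nn = Nn * J)
    (hsum : β⁻¹ • (P - α • (1 : Module.End ℝ V)) = J + Nn)
    (hJ : J ^ 2 = -1)
    (Ac Bc : V → V → ℂ)
    (hAc : ∀ u v : V, Ac u v = (B (P u) v : ℂ) - Complex.I * (B (P u) (J v) : ℂ))
    (hBc : ∀ u v : V, Bc u v = (B u v : ℂ) - Complex.I * (B u (J v) : ℂ))
    (Q : V ≃ₗ[ℝ] V) :
    ((∀ u v : V, B (P (Q u)) (Q v) = B (P u) v) ∧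
      (∀ u v : V, B (Q u) (Q v) = B u v)) ↔
    ((∀ v : V, Q (J v) = J (Q v)) ∧
      (∀ u v : V, Ac (Q u) (Q v) = Ac u v) ∧
      (∀ u v : V, Bc (Q u) (Q v) = Bc u v)) := by
  set S : Module.End ℝ V := J + Nn with hSdef
  have hβS : β • S = P - α • 1 := by
    rw [← hsum, smul_smul, mul_inv_cancel₀ hβ, one_smul]
  have hPv : ∀ v : V, P v = α • v + β • S v := by
    intro v
    have h0 := congrArg (fun f : Module.End ℝ V => f v) hβS
    simp only [LinearMap.smul_apply, LinearMap.sub_apply, Module.End.one_apply] at h0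
    rw [h0]
    abel
  have hchar2 : (β ^ 2) • (S ^ 2 + 1) = P ^ 2 - (2 * α) • P + (α ^ 2 + β ^ 2) • 1 := by
    ext v
    simp only [pow_two, Module.End.mul_apply, LinearMap.add_apply, LinearMap.smul_apply,
      LinearMap.sub_apply, Module.End.one_apply]
    rw [hPv v, map_add, map_smul, map_smul, hPv v, hPv (S v)]
    module
  have hSn : (S ^ 2 + 1) ^ n = 0 := by
    have h5 : ((β ^ 2) ^ n) • (S ^ 2 + 1) ^ n = 0 := by
      rw [← _root_.smul_pow, hchar2, hchar]
    rcases smul_eq_zero.mp h5 with h6 | h6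
    · exact absurd h6 (pow_ne_zero n (pow_ne_zero 2 hβ))
    · exact h6
  obtain ⟨j, hj2, hjnil, hjcomm⟩ := exists_sqrt_neg_one S hSn
  have hJS : J * S = S * J := by rw [hSdef, mul_add, add_mul, hcomm]
  have hNS : Nn * S = S * Nn := by rw [hSdef, mul_add, add_mul, hcomm]
  have hjJ : J * j = j * J := hjcomm J hJS
  have hjN : Nn * j = j * Nn := hjcomm Nn hNS
  have hDnil : IsNilpotent (J - j) := by
    have e : J - j = (S - j) - Nn := by rw [hSdef]; abel
    rw [e]
    refine Commute.isNilpotent_sub ?_ hjnil hNn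
    show (S - j) * Nn = Nn * (S - j)
    rw [sub_mul, mul_sub, hNS, hjN]
  have hDE : (J - j) * ((J + j) * (J + j)) = 0 := by
    have e : (J - j) * (J + j) = 0 := by
      have e2 : (J - j) * (J + j) = J ^ 2 + J * j - j * J - j ^ 2 := by noncomm_ring
      rw [e2, hjJ, hJ, hj2]
      abel
    rw [← mul_assoc, e, zero_mul]
  have hEunit : IsUnit ((J + j) * (J + j)) := by
    have h9 : (J + j) * (J + j) + (J - j) * (J - j) = 2 * J ^ 2 + 2 * j ^ 2 := by noncomm_ring
    rw [hJ, hj2] at h9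
    have h10 : (2 : Module.End ℝ V) * (-1) + 2 * (-1) = -4 := by norm_num
    rw [h10] at h9
    have h11 : (J + j) * (J + j) = -(4 + (J - j) * (J - j)) := by
      rw [neg_add]
      rw [← h9]
      abel
    rw [h11]
    refine IsUnit.neg ?_
    have hD2 : IsNilpotent ((J - j) * (J - j)) := (Commute.refl _).isNilpotent_mul_left hDnil
    have isUnit4 : IsUnit (4 : Module.End ℝ V) := by
      have h12 : IsUnit (algebraMap ℝ (Module.End ℝ V) 4) :=
        (isUnit_iff_ne_zero.mpr (by norm_num)).map _
      rwa [map_ofNat] at h12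
    exact hD2.isUnit_add_left_of_commute isUnit4 (Commute.ofNat_right _ 4)
  have hJj : J = j := by
    obtain ⟨w, hw⟩ := hEunit.exists_right_inv
    have e : J - j = 0 := by
      calc J - j = (J - j) * ((J + j) * (J + j) * w) := by rw [hw, mul_one]
        _ = (J - j) * ((J + j) * (J + j)) * w := by noncomm_ring
        _ = 0 := by rw [hDE, zero_mul]
    exact sub_eq_zero.mp e
  constructor
  · rintro ⟨h1, h2⟩
    have hPQ : ∀ u, P (Q u) = Q (P u) := by
      intro u
      have hz : ∀ w, B (P (Q u) - Q (P u)) w = 0 := by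
        intro w
        have hw : w = Q (Q.symm w) := (Q.apply_symm_apply w).symm
        rw [hw, map_sub, LinearMap.sub_apply, h1 u (Q.symm w), h2 (P u) (Q.symm w), sub_self]
      exact sub_eq_zero.mp (hBnd _ hz)
    have hPq : P * (Q : V →ₗ[ℝ] V) = (Q : V →ₗ[ℝ] V) * P := LinearMap.ext fun u => hPQ u
    have hqS : (Q : V →ₗ[ℝ] V) * S = S * (Q : V →ₗ[ℝ] V) := by
      have h5 : (Q : V →ₗ[ℝ] V) * (β • S) = (β • S) * (Q : V →ₗ[ℝ] V) := by
        rw [hβS, mul_sub, sub_mul, hPq, mul_smul_comm, smul_mul_assoc, mul_one, one_mul]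
      rw [mul_smul_comm, smul_mul_assoc] at h5
      exact smul_right_injective _ hβ h5
    have hqj := hjcomm _ hqS
    have hQJ : ∀ v, Q (J v) = J (Q v) := by
      intro v
      have h6 := congrArg (fun f : Module.End ℝ V => f v) hqj
      simp only [Module.End.mul_apply] at h6
      rw [hJj]
      exact h6
    refine ⟨hQJ, ?_, ?_⟩
    · intro u v
      rw [hAc, hAc, ← hQJ v, h1 u v, h1 u (J v)]
    · intro u v
      rw [hBc, hBc, ← hQJ v, h2 u v, h2 u (J v)]
  · rintro ⟨hQJ, hAcp, hBcp⟩
    constructor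
    · intro u v
      have h7 := hAcp u v
      rw [hAc, hAc] at h7
      have h8 := congrArg Complex.re h7
      simpa using h8
    · intro u v
      have h7 := hBcp u v
      rw [hBc, hBc] at h7
      have h8 := congrArg Complex.re h7
      simpa using h8
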